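/- Let H, G : ℝ → ℝ be bounded measurable functions with H(f) + G(f) = 1 for all f, and let S : ℝ → ℝ be integrable on [−1/2, 1/2]. If the scaling covariances vanish asymptotically, i.e. C_J → 0 as J → ∞, then the series ∑_{j=1}^{∞} γ_j converges and ∫_{−1/2}^{1/2} S(f) df = ∑_{j=1}^{∞} γ_j. That is, the covariance of the bivariate process equals the infinite sum of its wavelet covariances over all scales. -/

import Mathlib

open Finset MeasureTheory Filter

/-- The level-`J` scaling covariance
`C_J = ∫_{−1/2}^{1/2} (∏_{l=0}^{J−1} G(2^l f)) S(f) df`. -/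
noncomputable def scalingCov (G S : ℝ → ℝ) (J : ℕ) : ℝ :=
  ∫ f in (-(1 : ℝ) / 2)..(1 / 2), (∏ l ∈ Finset.range J, G ((2 : ℝ) ^ l * f)) * S f

/-- The level-`J` wavelet covariance
`γ_J = ∫_{−1/2}^{1/2} H(2^{J−1} f) (∏_{l=0}^{J−2} G(2^l f)) S(f) df`. -/
noncomputable def waveletCov (H G S : ℝ → ℝ) (J : ℕ) : ℝ :=
  ∫ f in (-(1 : ℝ) / 2)..(1 / 2),
    H ((2 : ℝ) ^ (J - 1) * f) * (∏ l ∈ Finset.range (J - 1), G ((2 : ℝ) ^ l * f)) * S f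

lemma bdd_mul_intervalIntegrable (φ S : ℝ → ℝ) (hφ : Measurable φ)
    (hb : ∃ C : ℝ, ∀ f : ℝ, |φ f| ≤ C)
    (hS : IntervalIntegrable S volume (-(1 : ℝ) / 2) (1 / 2)) :
    IntervalIntegrable (fun f => φ f * S f) volume (-(1 : ℝ) / 2) (1 / 2) := by
  rw [intervalIntegrable_iff] at hS ⊢
  obtain ⟨C, hC⟩ := hb
  exact Integrable.bdd_mul hS (hφ.aestronglyMeasurable.restrict) (Filter.Eventually.of_forall fun x => hC x)

/-- For bounded measurable `H, G` with `H + G = 1` and `S` integrable on `[−1/2, 1/2]`: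
if the scaling covariances vanish asymptotically (`C_J → 0` as `J → ∞`), then the series
`∑_{j=1}^∞ γ_j` converges and `∫_{−1/2}^{1/2} S(f) df = ∑_{j=1}^∞ γ_j`. -/
theorem covariance_eq_infinite_sum_waveletCov (H G S : ℝ → ℝ)
    (hHmeas : Measurable H) (hGmeas : Measurable G)
    (hHbd : ∃ C : ℝ, ∀ f : ℝ, |H f| ≤ C) (hGbd : ∃ C : ℝ, ∀ f : ℝ, |G f| ≤ C)
    (hHG : ∀ f : ℝ, H f + G f = 1)
    (hS : IntervalIntegrable S volume (-(1 : ℝ) / 2) (1 / 2))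
    (hC0 : Tendsto (fun J : ℕ => scalingCov G S J) atTop (nhds 0)) :
    Tendsto (fun J : ℕ => ∑ j ∈ Finset.Icc 1 J, waveletCov H G S j) atTop
      (nhds (∫ f in (-(1 : ℝ) / 2)..(1 / 2), S f)) := by
  obtain ⟨CG, hCG⟩ := hGbd
  have hCG0 : 0 ≤ CG := le_trans (abs_nonneg _) (hCG 0)
  -- integrability of products
  have hprod : ∀ n : ℕ, IntervalIntegrable
      (fun f => (∏ l ∈ Finset.range n, G ((2 : ℝ) ^ l * f)) * S f)
      volume (-(1 : ℝ) / 2) (1 / 2) := by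
    intro n
    apply bdd_mul_intervalIntegrable _ _ ?_ ?_ hS
    · exact Finset.measurable_prod _ (fun l _ => hGmeas.comp (measurable_const_mul _))
    · refine ⟨CG ^ n, fun f => ?_⟩
      calc |∏ l ∈ Finset.range n, G ((2 : ℝ) ^ l * f)|
          = ∏ l ∈ Finset.range n, |G ((2 : ℝ) ^ l * f)| := by
            rw [Finset.abs_prod]
        _ ≤ ∏ l ∈ Finset.range n, CG :=
            Finset.prod_le_prod (fun l _ => abs_nonneg _) (fun l _ => hCG _)
        _ = CG ^ n := by simp
  -- key identity: γ_{i+1} = C_i - C_{i+1}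
  have hkey : ∀ i : ℕ, waveletCov H G S (i + 1) = scalingCov G S i - scalingCov G S (i + 1) := by
    intro i
    unfold waveletCov scalingCov
    rw [← intervalIntegral.integral_sub (hprod i) (hprod (i + 1))]
    apply intervalIntegral.integral_congr
    intro f _
    have hH : H ((2 : ℝ) ^ i * f) = 1 - G ((2 : ℝ) ^ i * f) := by
      have := hHG ((2 : ℝ) ^ i * f); linarith
    simp only [Nat.add_sub_cancel, Finset.prod_range_succ, hH]
    ring
  -- telescoping sum
  have hsum : ∀ J : ℕ, ∑ j ∈ Finset.Icc 1 J, waveletCov H G S j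
      = scalingCov G S 0 - scalingCov G S J := by
    intro J
    rw [← Finset.Ico_add_one_right_eq_Icc, Finset.sum_Ico_eq_sum_range]
    simp only [Nat.add_sub_cancel]
    have : ∀ i ∈ Finset.range J, waveletCov H G S (1 + i)
        = scalingCov G S i - scalingCov G S (i + 1) := by
      intro i _
      rw [add_comm 1 i, hkey i]
    rw [Finset.sum_congr rfl this, Finset.sum_range_sub']
  have hC0eq : scalingCov G S 0 = ∫ f in (-(1 : ℝ) / 2)..(1 / 2), S f := by
    unfold scalingCov
    simp
  simp only [hsum, hC0eq]
  have := Tendsto.const_sub (∫ f in (-(1 : ℝ) / 2)..(1 / 2), S f) hC0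
  simpa using this
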